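/- For pattern (SEQ(A+,B))+ under skip-till-any-match, the type-grained recurrences A.count ← A.count + (A.count + B.count + 1) upon each a-event and B.count ← B.count + A.count upon each b-event correctly compute the total number of matched trends; in particular on the stream a,b,a,a,b,a,b the final count is 43. -/

import Mathlib

attribute [local instance] Classical.propDecidable

inductive Lab where
  | A | B
deriving DecidableEq

/-- A block matched by `SEQ(A+, B)`: one or more `A`s followed by one `B`. -/
inductive Blk : List Lab → Prop where
  | mk (k : ℕ) (hk : 1 ≤ k) : Blk (List.replicate k Lab.A ++ [Lab.B])

/-- A trend matched by `(SEQ(A+, B))+`: a concatenation of one or more blocks. -/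
inductive Pat : List Lab → Prop where
  | one {s : List Lab} : Blk s → Pat s
  | cons {s t : List Lab} : Blk s → Pat t → Pat (s ++ t)

/-- The type-grained updates: upon an `a`-event, `A.count += A.count + B.count + 1`;
upon a `b`-event, `B.count += A.count`. The state is `(A.count, B.count)`. -/
def step (s : ℕ × ℕ) (x : Lab) : ℕ × ℕ :=
  match x with
  | Lab.A => (s.1 + (s.1 + s.2 + 1), s.2)
  | Lab.B => (s.1, s.2 + s.1)

/-- Partial matches: zero or more blocks followed by a nonempty run of `A`s. -/
inductive QA : List Lab → Prop where
  | arun (k : ℕ) (hk : 1 ≤ k) : QA (List.replicate k Lab.A)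
  | cons {s t : List Lab} : Blk s → QA t → QA (s ++ t)

lemma pat_endB : ∀ {u : List Lab}, Pat u → ∃ u', u = u' ++ [Lab.B] := by
  intro u hu
  induction hu with
  | one hb => rcases hb with ⟨k, hk⟩; exact ⟨_, rfl⟩
  | cons hb _ ih =>
      rcases ih with ⟨u', rfl⟩
      exact ⟨_, (List.append_assoc _ _ _).symm⟩

lemma qa_endA : ∀ {u : List Lab}, QA u → ∃ u', u = u' ++ [Lab.A] := by
  intro u hu
  induction hu with
  | arun k hk =>
      refine ⟨List.replicate (k - 1) Lab.A, ?_⟩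
      rw [← List.replicate_succ' (n := k-1)]
      congr 1
      omega
  | cons hb _ ih =>
      rcases ih with ⟨u', rfl⟩
      exact ⟨_, (List.append_assoc _ _ _).symm⟩

lemma pat_ne_nil {u : List Lab} (h : Pat u) : u ≠ [] := by
  rcases pat_endB h with ⟨u', rfl⟩; simp

lemma qa_ne_nil {u : List Lab} (h : QA u) : u ≠ [] := by
  rcases qa_endA h with ⟨u', rfl⟩; simp

lemma not_pat_and_qa {u : List Lab} : ¬ (QA u ∧ Pat u) := by
  rintro ⟨hq, hp⟩
  rcases qa_endA hq with ⟨u', h1⟩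
  rcases pat_endB hp with ⟨u'', h2⟩
  rw [h1] at h2
  have := (List.append_inj' h2 rfl).2
  simp at this

lemma pat_concatB_iff {t : List Lab} : Pat (t ++ [Lab.B]) ↔ QA t := by
  constructor
  · intro h
    generalize hu : t ++ [Lab.B] = u at h
    induction h generalizing t with
    | one hb =>
        rcases hb with ⟨k, hk⟩
        have : t = List.replicate k Lab.A := by
          have := List.append_inj' hu.symm rfl
          exact this.1.symm
        rw [this]; exact QA.arun k hk
    | cons hb hp ih =>
        rename_i s r
        rcases pat_endB hp with ⟨r', rfl⟩
        rw [← List.append_assoc] at hu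
        have h2 := List.append_inj' hu rfl
        rw [h2.1]
        exact QA.cons hb (ih rfl)
  · intro h
    induction h with
    | arun k hk => exact Pat.one (Blk.mk k hk)
    | cons hb _ ih => rw [List.append_assoc]; exact Pat.cons hb ih
-- note: in the backward direction `cons` case, goal is Pat ((s++t)++[B]).

lemma qa_concatA_of_qa {t : List Lab} (h : QA t) : QA (t ++ [Lab.A]) := by
  induction h with
  | arun k hk =>
      rw [← List.replicate_succ' (n := k)]
      exact QA.arun (k+1) (by omega)
  | cons hb _ ih => rw [List.append_assoc]; exact QA.cons hb ih

lemma qa_concatA_of_pat {t : List Lab} (h : Pat t) : QA (t ++ [Lab.A]) := by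
  induction h with
  | one hb => exact QA.cons hb (QA.arun 1 le_rfl)
  | cons hb _ ih => rw [List.append_assoc]; exact QA.cons hb ih

lemma qa_concatA_iff {t : List Lab} :
    QA (t ++ [Lab.A]) ↔ (t = [] ∨ QA t ∨ Pat t) := by
  constructor
  · intro h
    generalize hu : t ++ [Lab.A] = u at h
    induction h generalizing t with
    | arun k hk =>
        have hk1 : t = List.replicate (k - 1) Lab.A := by
          have : List.replicate (k-1) Lab.A ++ [Lab.A] = List.replicate k Lab.A := by
            rw [← List.replicate_succ' (n := k-1)]; congr 1; omega
          rw [← this] at hu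
          exact (List.append_inj' hu rfl).1
        rcases Nat.eq_or_lt_of_le hk with h1 | h1
        · left; rw [hk1, ← h1]; simp
        · right; left; rw [hk1]; exact QA.arun (k-1) (by omega)
    | cons hb hq ih =>
        rename_i s r
        rcases qa_endA hq with ⟨r', rfl⟩
        rw [← List.append_assoc] at hu
        have h2 := List.append_inj' hu rfl
        rcases ih rfl with h3 | h3 | h3
        · right; right; rw [h2.1, h3, List.append_nil]; exact Pat.one hb
        · right; left; rw [h2.1]; exact QA.cons hb h3
        · right; right; rw [h2.1]; exact Pat.cons hb h3
  · rintro (rfl | h | h)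
    · exact QA.arun 1 le_rfl
    · exact qa_concatA_of_qa h
    · exact qa_concatA_of_pat h

lemma not_pat_concatA {t : List Lab} : ¬ Pat (t ++ [Lab.A]) := by
  intro h
  rcases pat_endB h with ⟨u', h2⟩
  have := (List.append_inj' h2 rfl).2
  simp at this

lemma not_qa_concatB {t : List Lab} : ¬ QA (t ++ [Lab.B]) := by
  intro h
  rcases qa_endA h with ⟨u', h2⟩
  have := (List.append_inj' h2 rfl).2
  simp at this

lemma countP_split {α : Type*} (p q : α → Prop) (e e1 e2 : α → Bool)
    (h1 : ∀ x, e1 x = true ↔ p x) (h2 : ∀ x, e2 x = true ↔ q x)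
    (hd : ∀ x, ¬ (p x ∧ q x)) :
    ∀ l : List α, (∀ x ∈ l, (e x = true ↔ p x ∨ q x)) →
      l.countP e = l.countP e1 + l.countP e2 := by
  intro l
  induction l with
  | nil => intro _; simp
  | cons a l ih =>
      intro he
      have he' : ∀ x ∈ l, (e x = true ↔ p x ∨ q x) :=
        fun x hx => he x (List.mem_cons_of_mem a hx)
      have hea := he a (List.mem_cons_self (a := a) (l := l))
      rw [List.countP_cons, List.countP_cons, List.countP_cons, ih he']
      by_cases hp : p a <;> by_cases hq : q a
      · exact absurd ⟨hp, hq⟩ (hd a)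
      · have ea : e a = true := hea.mpr (Or.inl hp)
        have ea1 : e1 a = true := (h1 a).mpr hp
        have ea2 : e2 a = false := by
          rw [Bool.eq_false_iff]; intro hc; exact hq ((h2 a).mp hc)
        simp [ea, ea1, ea2]; omega
      · have ea : e a = true := hea.mpr (Or.inr hq)
        have ea1 : e1 a = false := by
          rw [Bool.eq_false_iff]; intro hc; exact hp ((h1 a).mp hc)
        have ea2 : e2 a = true := (h2 a).mpr hq
        simp [ea, ea1, ea2]; omega
      · have ea : e a = false := by
          rw [Bool.eq_false_iff]; intro hc
          rcases hea.mp hc with h | h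
          exacts [hp h, hq h]
        have ea1 : e1 a = false := by
          rw [Bool.eq_false_iff]; intro hc; exact hp ((h1 a).mp hc)
        have ea2 : e2 a = false := by
          rw [Bool.eq_false_iff]; intro hc; exact hq ((h2 a).mp hc)
        simp [ea, ea1, ea2]

lemma count_nil_sublists {α : Type*} (l : List α) (e : List α → Bool)
    (he : ∀ t, e t = true ↔ t = []) :
    l.sublists.countP e = 1 := by
  induction l using List.reverseRecOn with
  | nil =>
      simp only [List.sublists_nil, List.countP_cons, List.countP_nil]
      rw [(he []).mpr rfl]
      simp
  | append_singleton l a ih =>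
      rw [List.sublists_concat, List.countP_append, List.countP_map, ih]
      have : List.countP (e ∘ fun x => x ++ [a]) l.sublists = 0 := by
        apply List.countP_eq_zero.mpr
        intro t _
        simp only [Function.comp]
        intro hc
        have := (he _).mp hc
        simp at this
      rw [this]

lemma main_inv (l : List Lab) :
    l.foldl step (0, 0) =
      (l.sublists.countP (fun t => decide (QA t)),
       l.sublists.countP (fun t => decide (Pat t))) := by
  induction l using List.reverseRecOn with
  | nil =>
      have h1 : ¬ QA [] := fun h => qa_ne_nil h rfl
      have h2 : ¬ Pat [] := fun h => pat_ne_nil h rfl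
      simp [h1, h2]
  | append_singleton l x ih =>
      rw [List.foldl_append, ih]
      rw [List.sublists_concat, List.countP_append, List.countP_append,
        List.countP_map, List.countP_map]
      cases x with
      | A =>
          have hq : List.countP ((fun t => decide (QA t)) ∘ fun t => t ++ [Lab.A]) l.sublists
              = 1 + (List.countP (fun t => decide (QA t)) l.sublists
                  + List.countP (fun t => decide (Pat t)) l.sublists) := by
            calc List.countP ((fun t => decide (QA t)) ∘ fun t => t ++ [Lab.A]) l.sublists
                = List.countP (fun t : List Lab => decide (t = [])) l.sublists
                  + List.countP (fun t => decide (QA t) || decide (Pat t)) l.sublists := by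
                  apply countP_split (fun t : List Lab => t = []) (fun t => QA t ∨ Pat t)
                  · intro x; simp
                  · intro x; simp
                  · rintro x ⟨rfl, h | h⟩
                    exacts [qa_ne_nil h rfl, pat_ne_nil h rfl]
                  · intro x _
                    simp [Function.comp, qa_concatA_iff]
              _ = 1 + (List.countP (fun t => decide (QA t)) l.sublists
                  + List.countP (fun t => decide (Pat t)) l.sublists) := by
                  rw [count_nil_sublists l _ (fun t => by simp)]
                  rw [countP_split QA Pat (fun t => decide (QA t) || decide (Pat t))
                      (fun t => decide (QA t)) (fun t => decide (Pat t))
                      (fun x => by simp) (fun x => by simp)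
                      (fun x h => not_pat_and_qa h) l.sublists (fun x _ => by simp)]
          have hp : List.countP ((fun t => decide (Pat t)) ∘ fun t => t ++ [Lab.A]) l.sublists
              = 0 := by
            apply List.countP_eq_zero.mpr
            intro t _
            simp [Function.comp, not_pat_concatA]
          rw [hq, hp]
          simp [step]
          omega
      | B =>
          have hq : List.countP ((fun t => decide (QA t)) ∘ fun t => t ++ [Lab.B]) l.sublists
              = 0 := by
            apply List.countP_eq_zero.mpr
            intro t _
            simp [Function.comp, not_qa_concatB]
          have hp : List.countP ((fun t => decide (Pat t)) ∘ fun t => t ++ [Lab.B]) l.sublists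
              = List.countP (fun t => decide (QA t)) l.sublists := by
            apply List.countP_congr
            intro t _
            simp [Function.comp, pat_concatB_iff]
          rw [hq, hp]
          simp [step]

/-- For `(SEQ(A+,B))+` under skip-till-any-match, the type-grained recurrences correctly
compute the total number of matched trends (nonempty subsequences parseable as blocks);
in particular, on the stream `a,b,a,a,b,a,b` the final count is `43`. -/
theorem stmt7 :
    (∀ stream : List Lab,
      (stream.foldl step (0, 0)).2 =
        stream.sublists.countP (fun tr => decide (Pat tr))) ∧
    (([Lab.A, Lab.B, Lab.A, Lab.A, Lab.B, Lab.A, Lab.B] : List Lab).foldl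
        step (0, 0)).2 = 43 := by
  constructor
  · intro stream
    rw [main_inv]
  · rfl
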